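/- Let a_1, …, a_r be positive integers with a_r ≥ 2 and let b ≥ 2 be an integer. If q is the denominator of the fraction [a_1, …, a_r] = 1/(a_1 + 1/(⋯ + 1/a_r)) in lowest terms, then the denominator of the fraction given by the continued fraction [a_1, …, a_r, b − 1, 1, a_r − 1, a_{r−1}, …, a_1], written in lowest terms, equals b·q^2. -/

import Mathlib

/-- The value of the finite simple continued fraction `1/(a₁ + 1/(a₂ + ⋯ + 1/aᵣ))`. -/
def cfVal : List ℕ → ℚ
  | [] => 0
  | a :: l => 1 / (a + cfVal l)

namespace CFaux

/-- `(numerator, denominator)` pair of `cfVal l`, as continuants. -/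
def f : List ℕ → ℕ × ℕ
  | [] => (0, 1)
  | a :: l => ((f l).2, a * (f l).2 + (f l).1)

/-- the "second row": continuants of `dropLast`. -/
def g : List ℕ → ℕ × ℕ
  | [] => (1, 0)
  | a :: l => ((g l).2, a * (g l).2 + (g l).1)

theorem f_append (l m : List ℕ) :
    f (l ++ m) = ((f m).1 * (g l).1 + (f m).2 * (f l).1,
                  (f m).1 * (g l).2 + (f m).2 * (f l).2) ∧
    g (l ++ m) = ((g m).1 * (g l).1 + (g m).2 * (f l).1,
                  (g m).1 * (g l).2 + (g m).2 * (f l).2) := by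
  induction l with
  | nil => simp [f, g]
  | cons a l ih =>
    simp only [List.cons_append, f, g, List.append_eq, ih.1, ih.2]
    constructor <;> · simp only [Prod.mk.injEq]; refine ⟨trivial, ?_⟩; ring

theorem f_reverse (l : List ℕ) :
    f l.reverse = ((g l).2, (f l).2) ∧ g l.reverse = ((g l).1, (f l).1) := by
  induction l with
  | nil => simp [f, g]
  | cons a l ih =>
    have h := f_append l.reverse [a]
    rw [List.reverse_cons, h.1, h.2, ih.1, ih.2]
    simp only [f, g]
    constructor <;> · simp only [Prod.mk.injEq]; constructor <;> ring

theorem f_coprime (l : List ℕ) : Nat.Coprime (f l).1 (f l).2 := by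
  induction l with
  | nil => simp [f, Nat.Coprime]
  | cons a l ih =>
    simp only [f]
    rw [add_comm]
    exact (Nat.coprime_add_mul_right_right _ _ _).mpr ih.symm

theorem f_pos (l : List ℕ) (hl : ∀ x ∈ l, 0 < x) : 0 < (f l).2 := by
  induction l with
  | nil => simp [f]
  | cons a l ih =>
    simp only [f]
    have ha : 0 < a := hl a (by simp)
    have := ih (fun x hx => hl x (by simp [hx]))
    positivity

theorem cfVal_eq (l : List ℕ) (hl : ∀ x ∈ l, 0 < x) :
    cfVal l = ((f l).1 : ℚ) / ((f l).2 : ℚ) := by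
  induction l with
  | nil => simp [cfVal, f]
  | cons a l ih =>
    have hd : 0 < (f l).2 := f_pos l (fun x hx => hl x (by simp [hx]))
    have ha : 0 < a := hl a (by simp)
    rw [cfVal, ih (fun x hx => hl x (by simp [hx]))]
    simp only [f]
    have hd' : ((f l).2 : ℚ) ≠ 0 := by positivity
    have hden : (a : ℚ) * (f l).2 + (f l).1 ≠ 0 := by positivity
    field_simp
    norm_cast

theorem den_eq (l : List ℕ) (hl : ∀ x ∈ l, 0 < x) : (cfVal l).den = (f l).2 := by
  rw [cfVal_eq l hl]
  have hd : 0 < (f l).2 := f_pos l hl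
  have hc : Nat.Coprime ((f l).1 : ℤ).natAbs ((f l).2 : ℤ).natAbs := by
    simpa using f_coprime l
  have := Rat.den_div_eq_of_coprime (a := ((f l).1 : ℤ)) (b := ((f l).2 : ℤ))
    (by exact_mod_cast hd) hc
  have h2 : ((((f l).1 : ℤ) : ℚ) / (((f l).2 : ℤ) : ℚ)).den = (f l).2 := by
    exact_mod_cast this
  simpa using h2

end CFaux

/-- If `q` is the denominator in lowest terms of `[a₁, …, aᵣ]` (the list `M ++ [a]`
with `a = aᵣ ≥ 2`) and `b ≥ 2`, then the denominator in lowest terms of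
`[a₁, …, aᵣ, b - 1, 1, aᵣ - 1, aᵣ₋₁, …, a₁]` equals `b q²`. -/
theorem folded_denominator (M : List ℕ) (a b : ℕ) (hM : ∀ x ∈ M, 0 < x)
    (ha : 2 ≤ a) (hb : 2 ≤ b) :
    (cfVal (M ++ [a, b - 1, 1, a - 1] ++ M.reverse)).den =
      b * (cfVal (M ++ [a])).den ^ 2 := by
  open CFaux in
  have hpos1 : ∀ x ∈ M ++ [a, b - 1, 1, a - 1] ++ M.reverse, 0 < x := by
    intro x hx
    simp only [List.mem_append, List.mem_reverse, List.mem_cons, List.not_mem_nil,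
      or_false] at hx
    rcases hx with (hx | rfl | rfl | rfl | rfl) | hx
    · exact hM x hx
    · omega
    · omega
    · omega
    · omega
    · exact hM x hx
  have hpos2 : ∀ x ∈ M ++ [a], 0 < x := by
    intro x hx
    simp only [List.mem_append, List.mem_singleton] at hx
    rcases hx with hx | rfl
    · exact hM x hx
    · omega
  rw [CFaux.den_eq _ hpos1, CFaux.den_eq _ hpos2]
  -- now a pure natural number identity about continuants
  have h1 := (CFaux.f_append M ([a, b - 1, 1, a - 1] ++ M.reverse)).1
  have h2 := (CFaux.f_append M [a]).1
  have hr := (CFaux.f_reverse M).1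
  rw [List.append_assoc, h1, h2]
  simp only [List.cons_append, List.nil_append, List.append_eq, CFaux.f, hr]
  zify [show (1:ℕ) ≤ a by omega, show (1:ℕ) ≤ b by omega]
  ring
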